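/- Let G be a connected multigraph with exactly one cycle C = (v_0, ..., v_{n-1}, v_0), let x_1 = v_k and x_2 be distinct vertices of V(C)\{v_0}, and let y ∈ V(G⟨v_0⟩)\{v_0}. For i = 1,2, let p_i ∈ [1, min{res(x_i), res(y)}] and H_i = G + p_i·x_i y. If H_1 and H_2 are isomorphic, then x_2 = v_{n−k}. -/

import Mathlib

set_option linter.unusedSectionVars false
set_option linter.unusedVariables false
set_option linter.unnecessarySimpa false
open SimpleGraph Walk
namespace Scratch
variable {V : Type} {Γ : SimpleGraph V}

lemma getVert_support_get {u v : V} (p : Γ.Walk u v) {i : ℕ} (hi : i ≤ p.length) :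
    p.support[i]? = some (p.getVert i) := by
  induction p generalizing i with
  | nil =>
    simp only [Walk.length_nil, Nat.le_zero] at hi
    subst hi; simp [Walk.getVert]
  | cons h p ih =>
    cases i with
    | zero => simp [Walk.getVert]
    | succ n =>
      simp only [Walk.support_cons, List.getElem?_cons_succ, Walk.getVert_cons_succ]
      exact ih (by simpa [Nat.succ_le_succ_iff] using hi)

lemma IsPath.getVert_inj {u v : V} {p : Γ.Walk u v} (hp : p.IsPath) {i j : ℕ}
    (hi : i ≤ p.length) (hj : j ≤ p.length) (h : p.getVert i = p.getVert j) : i = j := by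
  have h1 := getVert_support_get p hi
  have h2 := getVert_support_get p hj
  rw [h] at h1
  have hnd := hp.support_nodup
  have hlen := p.length_support
  have hi' : i < p.support.length := by omega
  have hj' : j < p.support.length := by omega
  rw [List.getElem?_eq_getElem hi'] at h1
  rw [List.getElem?_eq_getElem hj'] at h2
  have heq : p.support[i] = p.support[j] := by
    rw [Option.some_inj] at h1 h2; rw [h1, h2]
  exact (List.Nodup.getElem_inj_iff hnd).mp heq

lemma edge_getVert_mem {u v : V} (p : Γ.Walk u v) {i : ℕ} (hi : i < p.length) :
    s(p.getVert i, p.getVert (i+1)) ∈ p.edges := by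
  induction p generalizing i with
  | nil => simp at hi
  | cons h p ih =>
    cases i with
    | zero => simp [Walk.getVert]
    | succ n =>
      simp only [Walk.getVert_cons_succ, Walk.edges_cons, List.mem_cons]
      right; exact ih (by simpa [Nat.succ_lt_succ_iff] using hi)

/-- a path from a vertex to itself is nil -/
lemma IsPath.loop_eq_nil {u : V} {p : Γ.Walk u u} (hp : p.IsPath) : p = Walk.nil := by
  cases p with
  | nil => rfl
  | cons h q =>
    exfalso
    have := hp.support_nodup
    simp only [Walk.support_cons, List.nodup_cons] at this
    exact this.1 q.end_mem_support

/-- An edge of a path containing the path's first vertex is the first edge. -/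
lemma edge_at_start {a b : V} {W : Γ.Walk a b} (hW : W.IsPath) {e : Sym2 V}
    (he : e ∈ W.edges) (ha : a ∈ e) :
    ∃ (z : V) (h : Γ.Adj a z) (W' : Γ.Walk z b), W = Walk.cons h W' ∧ e = s(a, z) := by
  cases W with
  | nil => simp at he
  | cons h W' =>
    rename_i z
    simp only [Walk.edges_cons, List.mem_cons] at he
    rcases he with rfl | he
    · exact ⟨z, h, W', rfl, rfl⟩
    · exfalso
      obtain ⟨d, rfl⟩ := Sym2.mem_iff_exists.mp ha
      have : a ∈ W'.support := W'.fst_mem_support_of_mem_edges he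
      simp only [Walk.cons_isPath_iff] at hW
      exact hW.2 this



/-- decomposition of a cycle through an edge s(x,y), based at y -/
lemma cycle_edge_decomp {x y : V} (W : Γ.Walk y y) (hW : W.IsCycle)
    (he : s(x,y) ∈ W.edges) :
    ∃ (P : Γ.Walk x y), P.IsPath ∧ s(x,y) ∉ P.edges ∧ W.length = P.length + 1 := by
  cases W with
  | nil => simp at he
  | cons h W' =>
    rename_i z
    have hcyc := (Walk.cons_isCycle_iff W' h).mp hW
    obtain ⟨hW'path, hfst⟩ := hcyc
    simp only [Walk.edges_cons, List.mem_cons] at he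
    rcases he with heq | he
    · -- first edge is s(x,y) = s(y,z), so z = x
      have hz : z = x := by
        rw [Sym2.eq_swap (a := x)] at heq
        exact (Sym2.congr_right.mp heq).symm
      subst hz
      refine ⟨W', hW'path, ?_, by simp⟩
      intro hmem
      apply hfst
      rw [Sym2.eq_swap]
      exact hmem
    · -- s(x,y) is in W', contains endpoint y of W'
      have hyW : (y : V) ∈ (s(x,y) : Sym2 V) := by simp
      have herev : s(x,y) ∈ W'.reverse.edges := by rwa [Walk.edges_reverse, List.mem_reverse]
      obtain ⟨w, h2, W'', hdecomp, heq2⟩ := edge_at_start hW'path.reverse herev hyW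
      have hw : w = x := by
        rw [Sym2.eq_swap (a := x)] at heq2
        exact (Sym2.congr_right.mp heq2).symm
      subst hw
      -- now the old `x` is called `w`.  W'' : Walk w z ; P := W'' ++ cons (h.symm) nil
      refine ⟨W''.append (Walk.cons h.symm Walk.nil), ?_, ?_, ?_⟩
      · rw [Walk.isPath_def, Walk.support_append]
        have hrevpath : W'.reverse.IsPath := hW'path.reverse
        rw [hdecomp] at hrevpath
        simp only [Walk.cons_isPath_iff] at hrevpath
        simp only [Walk.support_cons, Walk.support_nil, List.tail_cons]
        rw [List.nodup_append]
        refine ⟨hrevpath.1.support_nodup, List.nodup_singleton y, ?_⟩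
        intro a haW'' b hay hab
        simp only [List.mem_singleton] at hay
        rw [hab, hay] at haW''
        exact hrevpath.2 haW''
      · rw [Walk.edges_append]
        simp only [Walk.edges_cons, Walk.edges_nil, List.mem_append, List.mem_cons]
        rintro (hmem | hmem)
        · have hrevpath : W'.reverse.IsPath := hW'path.reverse
          rw [hdecomp] at hrevpath
          have hnd := hrevpath.edges_nodup
          rw [Walk.edges_cons] at hnd
          rw [← heq2] at hnd
          exact (List.nodup_cons.mp hnd).1 hmem
        · rcases hmem with hmem | hmem
          · have hwz : w = z := Sym2.congr_left.mp hmem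
            subst hwz
            apply hfst
            rw [Sym2.eq_swap]
            exact he
          · simp at hmem
      · have h1 : W'.length = W''.length + 1 := by
          have := congrArg Walk.length hdecomp
          simpa using this
        simp [Walk.length_append, h1]

lemma edges_mapLe {G G' : SimpleGraph V} (h : G ≤ G') {u v : V} (p : G.Walk u v) :
    (p.mapLe h).edges = p.edges := by
  induction p with
  | nil => rfl
  | cons ha p ih => simp [Walk.mapLe] at ih ⊢

lemma support_mapLe {G G' : SimpleGraph V} (h : G ≤ G') {u v : V} (p : G.Walk u v) :
    (p.mapLe h).support = p.support := by
  induction p with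
  | nil => rfl
  | cons ha p ih => simp [Walk.mapLe] at ih ⊢

lemma length_mapLe {G G' : SimpleGraph V} (h : G ≤ G') {u v : V} (p : G.Walk u v) :
    (p.mapLe h).length = p.length := by
  simp [Walk.mapLe, Walk.length_map]

lemma getVert_mapLe {G G' : SimpleGraph V} (h : G ≤ G') {u v : V} (p : G.Walk u v) (i : ℕ) :
    (p.mapLe h).getVert i = p.getVert i := by
  induction p generalizing i with
  | nil => rfl
  | cons ha p ih =>
    cases i with
    | zero => rfl
    | succ n => simp [Walk.mapLe] at ih ⊢

section Cycle
variable [DecidableEq V] {v0 : V} {c : Γ.Walk v0 v0}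

/-- every non-cycle edge is a bridge -/
lemma bridge_of_not_cycle_edge (hu : ∀ (w : V) (c' : Γ.Walk w w), c'.IsCycle →
      ∀ e, e ∈ c'.edges ↔ e ∈ c.edges)
    {a b : V} (hadj : Γ.Adj a b) (hne : s(a,b) ∉ c.edges)
    (hr : (Γ.deleteEdges {s(a,b)}).Reachable a b) : False := by
  rw [SimpleGraph.deleteEdges] at hr
  obtain ⟨u, p, hp, hmem⟩ := SimpleGraph.adj_and_reachable_delete_edges_iff_exists_cycle.mp ⟨hadj, hr⟩
  exact hne ((hu u p hp _).mp hmem)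

lemma pend_inter_cycle_aux
    (hu : ∀ (w : V) (c' : Γ.Walk w w), c'.IsCycle → ∀ e, e ∈ c'.edges ↔ e ∈ c.edges)
    {u : V} (W : (Γ.deleteEdges {e | e ∈ c.edges}).Walk v0 u) (hP : W.IsPath)
    (hmem : u ∈ c.support) : u = v0 := by
  cases W with
  | nil => rfl
  | cons h W' =>
    exfalso
    rename_i z
    have hadj : Γ.Adj v0 z ∧ s(v0,z) ∉ c.edges := by
      simpa using h
    -- W' avoids the first edge
    have hW'path : W'.IsPath := hP.of_cons
    have hfst : s(v0,z) ∉ W'.edges := by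
      have := hP.edges_nodup
      rw [Walk.edges_cons] at this
      exact (List.nodup_cons.mp this).1
    -- map W' into Γ.deleteEdges {s(v0,z)}
    have hD : Γ.deleteEdges {e | e ∈ c.edges} ≤ Γ := by
      intro a b hab; exact (SimpleGraph.deleteEdges_adj.mp hab).1
    have hcond : ∀ e ∈ (W'.mapLe hD).edges, e ∉ ({s(v0,z)} : Set (Sym2 V)) := by
      intro e he
      rw [edges_mapLe] at he
      intro hmem'
      simp only [Set.mem_singleton_iff] at hmem'
      subst hmem'
      exact hfst he
    have hW1 : (Γ.deleteEdges {s(v0,z)}).Reachable z u :=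
      ⟨((W'.mapLe hD).toDeleteEdges _ hcond)⟩
    -- walk from u to v0 along the cycle
    have harc : ∀ e ∈ ((c.takeUntil u hmem).reverse.edges), e ∉ ({s(v0,z)} : Set (Sym2 V)) := by
      intro e he
      rw [Walk.edges_reverse, List.mem_reverse] at he
      have := c.edges_takeUntil_subset hmem he
      intro h1
      simp only [Set.mem_singleton_iff] at h1
      subst h1
      exact hadj.2 this
    have hW2 : (Γ.deleteEdges {s(v0,z)}).Reachable u v0 :=
      ⟨((c.takeUntil u hmem).reverse.toDeleteEdges _ harc)⟩
    exact bridge_of_not_cycle_edge hu hadj.1 hadj.2 ((hW1.trans hW2).symm)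

lemma delCyc_acyclic (hu : ∀ (w : V) (c' : Γ.Walk w w), c'.IsCycle →
      ∀ e, e ∈ c'.edges ↔ e ∈ c.edges) :
    (Γ.deleteEdges {e | e ∈ c.edges}).IsAcyclic := by
  intro v p hp
  have hD : Γ.deleteEdges {e | e ∈ c.edges} ≤ Γ := by
    intro a b hab; exact (SimpleGraph.deleteEdges_adj.mp hab).1
  have hp' : (p.mapLe hD).IsCycle := hp.mapLe _
  have hlen : 3 ≤ p.length := hp.three_le_length
  have hne : p.edges ≠ [] := by
    intro h
    have := p.length_edges
    rw [h] at this
    simp at this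
    omega
  obtain ⟨e, he⟩ := List.exists_mem_of_ne_nil _ hne
  have hec : e ∈ c.edges := by
    have := (hu v (p.mapLe hD) hp' e).mp (by rwa [edges_mapLe])
    exact this
  have : e ∈ (Γ.deleteEdges {e | e ∈ c.edges}).edgeSet := p.edges_subset_edgeSet he
  rw [SimpleGraph.edgeSet_deleteEdges] at this
  exact this.2 hec

/-- a pendant vertex on the cycle must be v0 -/
lemma pend_inter_cycle
    (hu : ∀ (w : V) (c' : Γ.Walk w w), c'.IsCycle → ∀ e, e ∈ c'.edges ↔ e ∈ c.edges)
    {u : V} (hr : (Γ.deleteEdges {e | e ∈ c.edges}).Reachable v0 u)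
    (hmem : u ∈ c.support) : u = v0 := by
  obtain ⟨W0⟩ := hr
  exact pend_inter_cycle_aux hu W0.toPath.val W0.toPath.prop hmem


/-- two incident cycle edges at each cycle vertex -/
lemma two_edges_at (hc : c.IsCycle) {u : V} (h : u ∈ c.support) :
    ∃ a b : V, a ≠ b ∧ s(u,a) ∈ c.edges ∧ s(u,b) ∈ c.edges ∧
      ∀ e ∈ c.edges, u ∈ e → (e = s(u,a) ∨ e = s(u,b)) := by
  have hrot := hc.rotate h
  have hmemiff : ∀ e, e ∈ (c.rotate u h).edges ↔ e ∈ c.edges :=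
    fun e => (c.rotate_edges u h).mem_iff
  set W := c.rotate u h with hWdef
  clear_value W
  clear hWdef
  cases W with
  | nil => exact absurd rfl hrot.ne_nil
  | cons h1 W' =>
    rename_i z
    obtain ⟨hW'path, hfst⟩ := (Walk.cons_isCycle_iff W' h1).mp hrot
    -- W'.reverse : u -> z
    have hrev : W'.reverse.IsPath := hW'path.reverse
    cases hrev' : W'.reverse with
    | nil =>
      exfalso
      have : W'.length = 0 := by
        have := congrArg Walk.length hrev'
        simpa using this
      have h3 := hrot.three_le_length
      simp [this] at h3
    | cons h2 W'' =>
      rename_i w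
      rw [hrev'] at hrev
      obtain ⟨hW''path, hnotm⟩ := (Walk.cons_isPath_iff h2 W'').mp hrev
      refine ⟨z, w, ?_, ?_, ?_, ?_⟩
      · rintro rfl
        apply hfst
        have : s(u,z) ∈ W'.reverse.edges := by rw [hrev']; simp
        rwa [Walk.edges_reverse, List.mem_reverse] at this
      · rw [← hmemiff]; simp
      · rw [← hmemiff]
        have : s(u,w) ∈ W'.reverse.edges := by rw [hrev']; simp
        rw [Walk.edges_reverse, List.mem_reverse] at this
        simp [this]
      · intro e he hue
        rw [← hmemiff] at he
        rw [Walk.edges_cons, List.mem_cons] at he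
        rcases he with rfl | he
        · left; rfl
        · have : e ∈ W'.reverse.edges := by rwa [Walk.edges_reverse, List.mem_reverse]
          rw [hrev', Walk.edges_cons, List.mem_cons] at this
          rcases this with rfl | hin
          · right; rfl
          · exfalso
            obtain ⟨d, rfl⟩ := Sym2.mem_iff_exists.mp hue
            exact hnotm (W''.fst_mem_support_of_mem_edges hin)

/-- getVert is injective on [0, length) for cycles -/
lemma cycle_getVert_inj (hc : c.IsCycle) {i j : ℕ} (hi : i < c.length) (hj : j < c.length)
    (h : c.getVert i = c.getVert j) : i = j := by
  have hnd := hc.support_nodup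
  have hlen := c.length_support
  have htl : c.support.tail.length = c.length := by
    rw [c.support_eq_cons] at hlen; simpa using hlen
  have hget : ∀ m : ℕ, m ≤ c.length → c.support[m]? = some (c.getVert m) :=
    fun m hm => getVert_support_get c hm
  have htail_get : ∀ m : ℕ, 0 < m → m ≤ c.length → c.support.tail[m-1]? = some (c.getVert m) := by
    intro m hm0 hm
    have := hget m hm
    rw [c.support_eq_cons] at this
    cases m with
    | zero => omega
    | succ k => simpa using this
  have hv0 : c.support.tail[c.length - 1]? = some v0 := by
    have := htail_get c.length (by omega) le_rfl
    rwa [c.getVert_length] at this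
  rcases Nat.eq_zero_or_pos i with rfl | hi0
  · rcases Nat.eq_zero_or_pos j with rfl | hj0
    · rfl
    · exfalso
      have h1 := htail_get j hj0 (le_of_lt hj)
      rw [← h] at h1
      rw [c.getVert_zero] at h1
      -- tail[j-1] = v0 = tail[n-1], nodup ⇒ j-1 = n-1 ⇒ j = n, contra
      have hj1 : j - 1 < c.support.tail.length := by omega
      have hn1 : c.length - 1 < c.support.tail.length := by omega
      rw [List.getElem?_eq_getElem hj1] at h1
      rw [List.getElem?_eq_getElem hn1] at hv0
      have : c.support.tail[j-1] = c.support.tail[c.length-1] := by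
        rw [Option.some_inj] at h1 hv0; rw [h1, hv0]
      have := (List.Nodup.getElem_inj_iff hnd).mp this
      omega
  · rcases Nat.eq_zero_or_pos j with rfl | hj0
    · exfalso
      have h1 := htail_get i hi0 (le_of_lt hi)
      rw [h] at h1
      rw [c.getVert_zero] at h1
      have hi1 : i - 1 < c.support.tail.length := by omega
      have hn1 : c.length - 1 < c.support.tail.length := by omega
      rw [List.getElem?_eq_getElem hi1] at h1
      rw [List.getElem?_eq_getElem hn1] at hv0
      have : c.support.tail[i-1] = c.support.tail[c.length-1] := by
        rw [Option.some_inj] at h1 hv0; rw [h1, hv0]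
      have := (List.Nodup.getElem_inj_iff hnd).mp this
      omega
    · have h1 := htail_get i hi0 (le_of_lt hi)
      have h2 := htail_get j hj0 (le_of_lt hj)
      rw [h] at h1
      have hi1 : i - 1 < c.support.tail.length := by omega
      have hj1 : j - 1 < c.support.tail.length := by omega
      rw [List.getElem?_eq_getElem hi1] at h1
      rw [List.getElem?_eq_getElem hj1] at h2
      have : c.support.tail[i-1] = c.support.tail[j-1] := by
        rw [Option.some_inj] at h1 h2; rw [h1, h2]
      have := (List.Nodup.getElem_inj_iff hnd).mp this
      omega

/-- end of takeUntil is getVert at its length -/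
lemma gv_append {u v w : V} (p : Γ.Walk u v) (q : Γ.Walk v w) :
    (p.append q).getVert p.length = v := by
  rw [Walk.getVert_append]
  simp

lemma getVert_takeUntil_length {x : V} (hx : x ∈ c.support) :
    c.getVert (c.takeUntil x hx).length = x := by
  have h := gv_append (c.takeUntil x hx) (c.dropUntil x hx)
  rwa [c.take_spec hx] at h

lemma takeUntil_length_lt (hc : c.IsCycle) {x : V} (hx : x ∈ c.support) (hxv : x ≠ v0) :
    (c.takeUntil x hx).length < c.length ∧ 0 < (c.takeUntil x hx).length := by
  have hg := getVert_takeUntil_length hx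
  have hle := c.length_takeUntil_le hx
  constructor
  · rcases lt_or_eq_of_le hle with h | h
    · exact h
    · exfalso; rw [h, c.getVert_length] at hg; exact hxv hg.symm
  · rcases Nat.eq_zero_or_pos (c.takeUntil x hx).length with h | h
    · exfalso; rw [h, c.getVert_zero] at hg; exact hxv hg.symm
    · exact h

lemma take_drop_length {x : V} (hx : x ∈ c.support) :
    (c.takeUntil x hx).length + (c.dropUntil x hx).length = c.length := by
  have := congrArg Walk.length (c.take_spec hx)
  rwa [Walk.length_append] at this

/-- takeUntil and dropUntil of a cycle (to a non-base vertex) are paths -/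
lemma takeUntil_isPath (hc : c.IsCycle) {x : V} (hx : x ∈ c.support) (hxv : x ≠ v0) :
    (c.takeUntil x hx).IsPath ∧ (c.dropUntil x hx).IsPath := by
  have hnd := hc.support_nodup
  have htail : c.support.tail
      = (c.takeUntil x hx).support.tail ++ (c.dropUntil x hx).support.tail := by
    conv_lhs => rw [← c.take_spec hx]
    exact Walk.tail_support_append _ _
  rw [htail, List.nodup_append] at hnd
  obtain ⟨hnd1, hnd2, hdisj⟩ := hnd
  have hxmem : x ∈ (c.takeUntil x hx).support.tail := by
    have := (c.takeUntil x hx).end_mem_support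
    rw [(c.takeUntil x hx).support_eq_cons] at this
    exact (List.mem_cons.mp this).resolve_left hxv
  have hv0mem : v0 ∈ (c.dropUntil x hx).support.tail := by
    have := (c.dropUntil x hx).end_mem_support
    rw [(c.dropUntil x hx).support_eq_cons] at this
    rcases List.mem_cons.mp this with h | h
    · exact absurd h.symm hxv
    · exact h
  constructor
  · rw [Walk.isPath_def, (c.takeUntil x hx).support_eq_cons, List.nodup_cons]
    exact ⟨fun hmem => hdisj _ hmem _ hv0mem rfl, hnd1⟩
  · rw [Walk.isPath_def, (c.dropUntil x hx).support_eq_cons, List.nodup_cons]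
    exact ⟨fun hmem => hdisj _ hxmem _ hmem rfl, hnd2⟩


/-- determinism of paths inside the cycle's edge set -/
lemma detm (hc : c.IsCycle) {b1 b2 : V} (W1 : Γ.Walk v0 b1) (W2 : Γ.Walk v0 b2)
    (h1 : W1.IsPath) (h2 : W2.IsPath)
    (hE1 : ∀ e ∈ W1.edges, e ∈ c.edges) (hE2 : ∀ e ∈ W2.edges, e ∈ c.edges)
    (hfst : W1.getVert 1 = W2.getVert 1) (hlen : W1.length ≤ W2.length) :
    ∀ i, i ≤ W1.length → W1.getVert i = W2.getVert i := by
  intro i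
  induction i using Nat.strong_induction_on with
  | _ i IH =>
    match i with
    | 0 => intro _; simp [Walk.getVert_zero]
    | 1 => intro _; exact hfst
    | (i+2) =>
      intro hi
      have e1 : W1.getVert (i+1) = W2.getVert (i+1) := IH (i+1) (by omega) (by omega)
      have e0 : W1.getVert i = W2.getVert i := IH i (by omega) (by omega)
      have hedge1 : s(W1.getVert (i+1), W1.getVert (i+2)) ∈ c.edges :=
        hE1 _ (edge_getVert_mem W1 (by omega))
      have hedge2 : s(W2.getVert (i+1), W2.getVert (i+2)) ∈ c.edges :=
        hE2 _ (edge_getVert_mem W2 (by omega))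
      have hedgep : s(W1.getVert i, W1.getVert (i+1)) ∈ c.edges :=
        hE1 _ (edge_getVert_mem W1 (by omega))
      have hus : W1.getVert (i+1) ∈ c.support :=
        c.snd_mem_support_of_mem_edges hedgep
      obtain ⟨a, b, hab, _, _, hclass⟩ := two_edges_at hc hus
      have hn1 : W1.getVert (i+2) = a ∨ W1.getVert (i+2) = b := by
        have := hclass _ hedge1 (by simp)
        rcases this with h | h
        · exact Or.inl (Sym2.congr_right.mp h)
        · exact Or.inr (Sym2.congr_right.mp h)
      have hn2 : W2.getVert (i+2) = a ∨ W2.getVert (i+2) = b := by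
        rw [← e1] at hedge2
        have := hclass _ hedge2 (by simp)
        rcases this with h | h
        · exact Or.inl (Sym2.congr_right.mp h)
        · exact Or.inr (Sym2.congr_right.mp h)
      have hprev : W1.getVert i = a ∨ W1.getVert i = b := by
        have hmem : s(W1.getVert (i+1), W1.getVert i) ∈ c.edges := by
          rwa [Sym2.eq_swap]
        have := hclass _ hmem (by simp)
        rcases this with h | h
        · exact Or.inl (Sym2.congr_right.mp h)
        · exact Or.inr (Sym2.congr_right.mp h)
      have hne1 : W1.getVert (i+2) ≠ W1.getVert i := by
        intro h
        have := IsPath.getVert_inj h1 (by omega) (by omega) h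
        omega
      have hne2 : W2.getVert (i+2) ≠ W1.getVert i := by
        rw [e0]
        intro h
        have := IsPath.getVert_inj h2 (by omega) (by omega) h
        omega
      rcases hprev with hp | hp <;> rcases hn1 with h1' | h1' <;> rcases hn2 with h2' | h2' <;>
        simp_all

/-- two paths from v0 to x with same first step and edges in the cycle have equal length -/
lemma same_end_length (hc : c.IsCycle) {x : V} (A P : Γ.Walk v0 x)
    (hA : A.IsPath) (hP : P.IsPath)
    (hEA : ∀ e ∈ A.edges, e ∈ c.edges) (hEP : ∀ e ∈ P.edges, e ∈ c.edges)
    (hfst : P.getVert 1 = A.getVert 1) : P.length = A.length := by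
  rcases le_total P.length A.length with hle | hle
  · have hagree := detm hc P A hP hA hEP hEA hfst hle P.length le_rfl
    rw [P.getVert_length] at hagree
    have : A.getVert P.length = A.getVert A.length := by rw [← hagree, A.getVert_length]
    exact IsPath.getVert_inj hA hle le_rfl this
  · have hagree := detm hc A P hA hP hEA hEP hfst.symm hle A.length le_rfl
    rw [A.getVert_length] at hagree
    have : P.getVert A.length = P.getVert P.length := by rw [← hagree, P.getVert_length]
    exact (IsPath.getVert_inj hP hle le_rfl this).symm

/-- a path from v0 to x using only cycle edges is one of the two arcs (in length) -/
lemma path_in_cycle_length (hc : c.IsCycle) {x : V} (hx : x ∈ c.support) (hxv : x ≠ v0)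
    (P : Γ.Walk v0 x) (hP : P.IsPath) (hE : ∀ e ∈ P.edges, e ∈ c.edges) :
    P.length = (c.takeUntil x hx).length ∨
      P.length = c.length - (c.takeUntil x hx).length := by
  obtain ⟨hjlt, hj0⟩ := takeUntil_length_lt hc hx hxv
  obtain ⟨htp, hdp⟩ := takeUntil_isPath hc hx hxv
  have hsum : (c.takeUntil x hx).length + (c.dropUntil x hx).length = c.length :=
    take_drop_length hx
  have hn3 : 3 ≤ c.length := hc.three_le_length
  have hA2p : (c.dropUntil x hx).reverse.IsPath := hdp.reverse
  have hA2len : (c.dropUntil x hx).reverse.length = c.length - (c.takeUntil x hx).length := by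
    rw [Walk.length_reverse]; omega
  have hEt : ∀ e ∈ (c.takeUntil x hx).edges, e ∈ c.edges :=
    fun e he => c.edges_takeUntil_subset hx he
  have hEA2 : ∀ e ∈ (c.dropUntil x hx).reverse.edges, e ∈ c.edges := by
    intro e he
    rw [Walk.edges_reverse, List.mem_reverse] at he
    exact c.edges_dropUntil_subset hx he
  -- getVert 1 values
  have happ := Walk.getVert_append (c.takeUntil x hx) (c.dropUntil x hx) 1
  rw [c.take_spec hx] at happ
  have hA1g : (c.takeUntil x hx).getVert 1 = c.getVert 1 := by
    rcases Nat.lt_or_ge 1 (c.takeUntil x hx).length with h | h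
    · rw [happ, if_pos h]
    · have hj1 : (c.takeUntil x hx).length = 1 := by omega
      rw [happ, if_neg (by omega)]
      have h1 : (c.dropUntil x hx).getVert (1 - (c.takeUntil x hx).length) = x := by
        rw [hj1]; simp [Walk.getVert_zero]
      have h2 : (c.takeUntil x hx).getVert 1 = x := by
        conv_lhs => rw [← hj1]
        exact (c.takeUntil x hx).getVert_length
      rw [h1, h2]
  have happ2 := Walk.getVert_append (c.takeUntil x hx) (c.dropUntil x hx) (c.length - 1)
  rw [c.take_spec hx] at happ2
  have hA2g : (c.dropUntil x hx).reverse.getVert 1 = c.getVert (c.length - 1) := by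
    rw [Walk.getVert_reverse]
    rw [happ2, if_neg (by omega)]
    congr 1
    omega
  have hdist : c.getVert 1 ≠ c.getVert (c.length - 1) := by
    intro h
    have := cycle_getVert_inj hc (by omega) (by omega) h
    omega
  -- P's first step
  have hPlen : 0 < P.length := by
    rcases Nat.eq_zero_or_pos P.length with h | h
    · exfalso
      have := P.getVert_length
      rw [h, P.getVert_zero] at this
      exact hxv this.symm
    · exact h
  obtain ⟨a, b, hab, _, _, hclass⟩ := two_edges_at hc c.start_mem_support
  have hsel : ∀ {y : V} (W : Γ.Walk v0 y), (∀ e ∈ W.edges, e ∈ c.edges) → 0 < W.length →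
      W.getVert 1 = a ∨ W.getVert 1 = b := by
    intro y W hEW hW0
    have hmem : s(W.getVert 0, W.getVert 1) ∈ W.edges := edge_getVert_mem W hW0
    rw [W.getVert_zero] at hmem
    have := hclass _ (hEW _ hmem) (by simp)
    rcases this with h | h
    · exact Or.inl (Sym2.congr_right.mp h)
    · exact Or.inr (Sym2.congr_right.mp h)
  have hPt : P.getVert 1 = a ∨ P.getVert 1 = b := hsel P hE hPlen
  have htsel : (c.takeUntil x hx).getVert 1 = a ∨ (c.takeUntil x hx).getVert 1 = b :=
    hsel _ hEt hj0
  have hA2sel : (c.dropUntil x hx).reverse.getVert 1 = a ∨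
      (c.dropUntil x hx).reverse.getVert 1 = b := by
    refine hsel _ hEA2 ?_
    rw [Walk.length_reverse]
    omega
  have hta : (c.takeUntil x hx).getVert 1 ≠ (c.dropUntil x hx).reverse.getVert 1 := by
    rw [hA1g, hA2g]; exact hdist
  have hcase : P.getVert 1 = (c.takeUntil x hx).getVert 1 ∨
      P.getVert 1 = (c.dropUntil x hx).reverse.getVert 1 := by
    rcases hPt with h | h
    · rcases htsel with h' | h'
      · left; rw [h, h']
      · rcases hA2sel with h'' | h''
        · right; rw [h, h'']
        · exfalso; apply hta; rw [h', h'']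
    · rcases htsel with h' | h'
      · rcases hA2sel with h'' | h''
        · exfalso; apply hta; rw [h', h'']
        · right; rw [h, h'']
      · left; rw [h, h']
  rcases hcase with h | h
  · left; exact same_end_length hc _ P htp hP hEt hE h
  · right
    rw [← hA2len]
    exact same_end_length hc _ P hA2p hP hEA2 hE h

/-- crossing lemma: a walk from a pendant vertex to a non-pendant vertex passes v0 -/
lemma cross (hc : c.IsCycle)
    (hu : ∀ (w : V) (c' : Γ.Walk w w), c'.IsCycle → ∀ e, e ∈ c'.edges ↔ e ∈ c.edges) :
    ∀ {a b : V} (W : Γ.Walk a b),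
      (Γ.deleteEdges {e | e ∈ c.edges}).Reachable v0 a → a ≠ v0 →
      ¬ (Γ.deleteEdges {e | e ∈ c.edges}).Reachable v0 b → v0 ∈ W.support := by
  intro a b W
  induction W with
  | nil =>
    intro ha _ hb
    exact absurd ha hb
  | @cons a z b hadj W' ih =>
    intro ha hav hb
    by_cases hz : z = v0
    · subst hz
      simp
    · have hedge : s(a,z) ∉ c.edges := by
        intro hmem
        have : a ∈ c.support := c.fst_mem_support_of_mem_edges hmem
        exact hav (pend_inter_cycle hu ha this)
      have hDadj : (Γ.deleteEdges {e | e ∈ c.edges}).Adj a z := by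
        rw [SimpleGraph.deleteEdges_adj]
        exact ⟨hadj, hedge⟩
      have hz' : (Γ.deleteEdges {e | e ∈ c.edges}).Reachable v0 z :=
        ha.trans ⟨hDadj.toWalk⟩
      have := ih hz' hz hb
      simp [this]

/-- a path from a pendant vertex to v0 avoids all cycle edges -/
lemma spath_aux (hc : c.IsCycle)
    (hu : ∀ (w : V) (c' : Γ.Walk w w), c'.IsCycle → ∀ e, e ∈ c'.edges ↔ e ∈ c.edges) :
    ∀ {sv t : V} (W : Γ.Walk sv t), t = v0 → W.IsPath →
      (Γ.deleteEdges {e | e ∈ c.edges}).Reachable v0 sv → sv ≠ v0 →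
      ∀ e ∈ W.edges, e ∉ c.edges := by
  intro sv t W
  induction W with
  | nil =>
    intro ht _ _ hsv
    exact absurd ht hsv
  | @cons a z _ hadj W' ih =>
    intro ht hP ha hav
    have hedge : s(a,z) ∉ c.edges := by
      intro hmem
      have : a ∈ c.support := c.fst_mem_support_of_mem_edges hmem
      exact hav (pend_inter_cycle hu ha this)
    intro e he
    rw [Walk.edges_cons, List.mem_cons] at he
    rcases he with rfl | he
    · exact hedge
    · by_cases hz : z = v0
      · exfalso
        subst ht
        subst hz
        have : W' = Walk.nil := IsPath.loop_eq_nil hP.of_cons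
        rw [this] at he
        simp at he
      · have hDadj : (Γ.deleteEdges {e | e ∈ c.edges}).Adj a z := by
          rw [SimpleGraph.deleteEdges_adj]
          exact ⟨hadj, hedge⟩
        exact ih ht hP.of_cons (ha.trans ⟨hDadj.toWalk⟩) hz e he

lemma spath (hc : c.IsCycle)
    (hu : ∀ (w : V) (c' : Γ.Walk w w), c'.IsCycle → ∀ e, e ∈ c'.edges ↔ e ∈ c.edges)
    {sv : V} (W : Γ.Walk sv v0) (hP : W.IsPath)
    (ha : (Γ.deleteEdges {e | e ∈ c.edges}).Reachable v0 sv) (hav : sv ≠ v0) :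
    ∀ e ∈ W.edges, e ∉ c.edges := spath_aux hc hu W rfl hP ha hav

/-- a path from a cycle vertex to v0 only uses cycle edges -/
lemma path_to_v0_edges (hc : c.IsCycle)
    (hu : ∀ (w : V) (c' : Γ.Walk w w), c'.IsCycle → ∀ e, e ∈ c'.edges ↔ e ∈ c.edges)
    {x : V} (hx : x ∈ c.support) (P : Γ.Walk x v0) (hP : P.IsPath) :
    ∀ e ∈ P.edges, e ∈ c.edges := by
  intro e he
  by_contra hne
  induction e using Sym2.inductionOn with
  | hf a b =>
  have hadj : Γ.Adj a b := P.edges_subset_edgeSet he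
  have ha : a ∈ P.support := P.fst_mem_support_of_mem_edges he
  have hAp : (P.takeUntil a ha).IsPath := hP.takeUntil ha
  have hBp : (P.dropUntil a ha).IsPath := hP.dropUntil ha
  have hsplit : P.edges = (P.takeUntil a ha).edges ++ (P.dropUntil a ha).edges := by
    conv_lhs => rw [← P.take_spec ha]
    exact Walk.edges_append _ _
  have hnd := hP.edges_nodup
  rw [hsplit, List.nodup_append] at hnd
  obtain ⟨hnd1, hnd2, hdisj⟩ := hnd
  have harcC : ∀ e' ∈ (c.takeUntil x hx).reverse.edges, e' ∈ c.edges := by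
    intro e' he'
    rw [Walk.edges_reverse, List.mem_reverse] at he'
    exact c.edges_takeUntil_subset hx he'
  rw [hsplit, List.mem_append] at he
  rcases he with he | he
  · -- e in the first part A : x → a; decompose A.reverse at its start a
    have herev : s(a,b) ∈ (P.takeUntil a ha).reverse.edges := by
      rwa [Walk.edges_reverse, List.mem_reverse]
    obtain ⟨z, hadj2, A'', hdecomp, heq⟩ := edge_at_start hAp.reverse herev (by simp)
    have hzb : b = z := Sym2.congr_right.mp heq
    subst hzb
    -- A'' : Walk z x with z = b
    have heA'' : s(a,b) ∉ A''.edges := by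
      have := hAp.reverse.edges_nodup
      rw [hdecomp, Walk.edges_cons] at this
      rw [heq]
      exact (List.nodup_cons.mp this).1
    have heB : s(a,b) ∉ (P.dropUntil a ha).edges := fun hmem => hdisj _ he _ hmem rfl
    -- reachability z=b to a avoiding s(a,b): b → x → v0 → a
    have w1 : (Γ.deleteEdges {s(a,b)}).Walk b x :=
      A''.toDeleteEdges _ (by
        intro e' he' hmem
        simp only [Set.mem_singleton_iff] at hmem
        subst hmem
        exact heA'' he')
    have w2 : (Γ.deleteEdges {s(a,b)}).Walk x v0 :=
      (c.takeUntil x hx).reverse.toDeleteEdges _ (by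
        intro e' he' hmem
        simp only [Set.mem_singleton_iff] at hmem
        subst hmem
        exact hne (harcC _ he'))
    have w3 : (Γ.deleteEdges {s(a,b)}).Walk v0 a :=
      (P.dropUntil a ha).reverse.toDeleteEdges _ (by
        intro e' he' hmem
        simp only [Set.mem_singleton_iff] at hmem
        subst hmem
        apply heB
        rwa [Walk.edges_reverse, List.mem_reverse] at he')
    exact bridge_of_not_cycle_edge hu hadj hne ⟨((w1.append w2).append w3).reverse⟩
  · -- e in the second part B : a → v0
    obtain ⟨z, hadj2, B', hdecomp, heq⟩ := edge_at_start hBp he (by simp)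
    have hzb : b = z := Sym2.congr_right.mp heq
    subst hzb
    have heB' : s(a,b) ∉ B'.edges := by
      have := hBp.edges_nodup
      rw [hdecomp, Walk.edges_cons] at this
      rw [heq]
      exact (List.nodup_cons.mp this).1
    have heA : s(a,b) ∉ (P.takeUntil a ha).edges := fun hmem => hdisj _ hmem _ he rfl
    -- reachability a to b avoiding s(a,b): a → x → v0 → b
    have w1 : (Γ.deleteEdges {s(a,b)}).Walk a x :=
      (P.takeUntil a ha).reverse.toDeleteEdges _ (by
        intro e' he' hmem
        simp only [Set.mem_singleton_iff] at hmem
        subst hmem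
        apply heA
        rwa [Walk.edges_reverse, List.mem_reverse] at he')
    have w2 : (Γ.deleteEdges {s(a,b)}).Walk x v0 :=
      (c.takeUntil x hx).reverse.toDeleteEdges _ (by
        intro e' he' hmem
        simp only [Set.mem_singleton_iff] at hmem
        subst hmem
        exact hne (harcC _ he'))
    have w3 : (Γ.deleteEdges {s(a,b)}).Walk v0 b :=
      B'.reverse.toDeleteEdges _ (by
        intro e' he' hmem
        simp only [Set.mem_singleton_iff] at hmem
        subst hmem
        apply heB'
        rwa [Walk.edges_reverse, List.mem_reverse] at he')
    exact bridge_of_not_cycle_edge hu hadj hne ⟨(w1.append w2).append w3⟩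

/-- the key classification: a path from a cycle vertex x to a pendant vertex y -/
lemma pathxy (hc : c.IsCycle)
    (hu : ∀ (w : V) (c' : Γ.Walk w w), c'.IsCycle → ∀ e, e ∈ c'.edges ↔ e ∈ c.edges)
    {x y : V} (hx : x ∈ c.support) (hxv : x ≠ v0)
    (hyr : (Γ.deleteEdges {e | e ∈ c.edges}).Reachable v0 y) (hyv : y ≠ v0)
    (Q : (Γ.deleteEdges {e | e ∈ c.edges}).Walk v0 y) (hQ : Q.IsPath)
    (P : Γ.Walk x y) (hP : P.IsPath) :
    P.length = (c.takeUntil x hx).length + Q.length ∨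
      P.length = (c.length - (c.takeUntil x hx).length) + Q.length := by
  have hxnr : ¬ (Γ.deleteEdges {e | e ∈ c.edges}).Reachable v0 x := by
    intro hr
    exact hxv (pend_inter_cycle hu hr hx)
  have hv0 : v0 ∈ P.support := by
    have := cross hc hu P.reverse hyr hyv hxnr
    rwa [Walk.support_reverse, List.mem_reverse] at this
  have hP1 : (P.takeUntil v0 hv0).IsPath := hP.takeUntil hv0
  have hP2 : (P.dropUntil v0 hv0).IsPath := hP.dropUntil hv0
  have hsum : (P.takeUntil v0 hv0).length + (P.dropUntil v0 hv0).length = P.length := by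
    have := congrArg Walk.length (P.take_spec hv0)
    rwa [Walk.length_append] at this
  -- the second part has length Q.length
  have hP2' : ∀ e ∈ (P.dropUntil v0 hv0).reverse.edges, e ∉ c.edges :=
    spath hc hu (P.dropUntil v0 hv0).reverse hP2.reverse hyr hyv
  have hcond : ∀ e ∈ (P.dropUntil v0 hv0).reverse.edges, e ∉ {e : Sym2 V | e ∈ c.edges} :=
    fun e he => hP2' e he
  have hlen2 : (P.dropUntil v0 hv0).length = Q.length := by
    have hacyc := delCyc_acyclic (c := c) hu
    have huniq := (SimpleGraph.isAcyclic_iff_path_unique.mp hacyc)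
    have hPD : ((P.dropUntil v0 hv0).reverse.toDeleteEdges _ hcond).IsPath :=
      Walk.IsPath.toDeleteEdges Γ _ hP2.reverse hcond
    have heqp := huniq ⟨((P.dropUntil v0 hv0).reverse.toDeleteEdges _ hcond).reverse,
      hPD.reverse⟩ ⟨Q, hQ⟩
    have hval : ((P.dropUntil v0 hv0).reverse.toDeleteEdges _ hcond).reverse = Q :=
      congrArg Subtype.val heqp
    have hlen := congrArg Walk.length hval
    rw [Walk.length_reverse, Walk.length_transfer, Walk.length_reverse] at hlen
    exact hlen
  -- the first part uses only cycle edges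
  have hE1 : ∀ e ∈ (P.takeUntil v0 hv0).edges, e ∈ c.edges :=
    path_to_v0_edges hc hu hx (P.takeUntil v0 hv0) hP1
  have hE1' : ∀ e ∈ (P.takeUntil v0 hv0).reverse.edges, e ∈ c.edges := by
    intro e he
    rw [Walk.edges_reverse, List.mem_reverse] at he
    exact hE1 e he
  have := path_in_cycle_length hc hx hxv (P.takeUntil v0 hv0).reverse hP1.reverse hE1'
  rw [Walk.length_reverse] at this
  rcases this with h | h
  · left; omega
  · right; omega

/-- helper: membership of support gives reachability from the start -/
lemma reach_of_mem_support {G' : SimpleGraph V} {a b u : V} (W : G'.Walk a b)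
    (h : u ∈ W.support) : G'.Reachable a u := ⟨W.takeUntil u h⟩

section Augmented

variable {H : SimpleGraph V} {x y : V}

/-- every cycle in the augmented graph has one of three lengths -/
lemma classification (hc : c.IsCycle)
    (hu : ∀ (w : V) (c' : Γ.Walk w w), c'.IsCycle → ∀ e, e ∈ c'.edges ↔ e ∈ c.edges)
    (hH : ∀ u v, H.Adj u v ↔ Γ.Adj u v ∨ s(u,v) = s(x,y))
    (hx : x ∈ c.support) (hxv : x ≠ v0) (hxy : x ≠ y) (hyΓ : ¬ Γ.Adj x y)
    (hyr : (Γ.deleteEdges {e | e ∈ c.edges}).Reachable v0 y) (hyv : y ≠ v0)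
    (Q : (Γ.deleteEdges {e | e ∈ c.edges}).Walk v0 y) (hQ : Q.IsPath)
    {w : V} (c' : H.Walk w w) (hc' : c'.IsCycle) :
    c'.length = c.length ∨
    c'.length = (c.takeUntil x hx).length + Q.length + 1 ∨
    c'.length = (c.length - (c.takeUntil x hx).length) + Q.length + 1 := by
  by_cases hmem : s(x,y) ∈ c'.edges
  · -- the cycle uses the new edge
    right
    have hy' : y ∈ c'.support := c'.snd_mem_support_of_mem_edges hmem
    have hrotc : (c'.rotate y hy').IsCycle := hc'.rotate hy'
    have hrotmem : s(x,y) ∈ (c'.rotate y hy').edges := ((c'.rotate_edges y hy').mem_iff).mpr hmem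
    have hrotlen : (c'.rotate y hy').length = c'.length := by
      have := (c'.rotate_edges y hy').perm.length_eq
      rw [Walk.length_edges, Walk.length_edges] at this
      exact this
    obtain ⟨P, hPp, hPne, hPlen⟩ := cycle_edge_decomp (c'.rotate y hy') hrotc hrotmem
    -- transfer P into Γ
    have hsub : ∀ e ∈ P.edges, e ∈ Γ.edgeSet := by
      intro e he
      have heH : e ∈ H.edgeSet := P.edges_subset_edgeSet he
      induction e using Sym2.inductionOn with
      | hf a b =>
        rw [SimpleGraph.mem_edgeSet] at heH ⊢
        rcases (hH a b).mp heH with h | h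
        · exact h
        · exfalso
          rw [h] at he
          exact hPne he
    have hPt : (P.transfer Γ hsub).IsPath := hPp.transfer hsub
    have := pathxy hc hu hx hxv hyr hyv Q hQ (P.transfer Γ hsub) hPt
    rw [Walk.length_transfer] at this
    rcases this with h | h
    · left; omega
    · right; omega
  · -- the cycle avoids the new edge: it is the original cycle
    left
    have hsub : ∀ e ∈ c'.edges, e ∈ Γ.edgeSet := by
      intro e he
      have heH : e ∈ H.edgeSet := c'.edges_subset_edgeSet he
      induction e using Sym2.inductionOn with
      | hf a b =>
        rw [SimpleGraph.mem_edgeSet] at heH ⊢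
        rcases (hH a b).mp heH with h | h
        · exact h
        · exfalso
          rw [h] at he
          exact hmem he
    have hct : (c'.transfer Γ hsub).IsCycle := hc'.transfer hsub
    have hiff := hu w (c'.transfer Γ hsub) hct
    rw [Walk.edges_transfer] at hiff
    have hperm : c'.edges.Perm c.edges := by
      rw [List.perm_ext_iff_of_nodup hc'.edges_nodup hc.edges_nodup]
      exact hiff
    have := hperm.length_eq
    rwa [Walk.length_edges, Walk.length_edges] at this


/-- build a cycle in the augmented graph from an arc -/
lemma build_cycle (hc : c.IsCycle)
    (hu : ∀ (w : V) (c' : Γ.Walk w w), c'.IsCycle → ∀ e, e ∈ c'.edges ↔ e ∈ c.edges)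
    (hH : ∀ u v, H.Adj u v ↔ Γ.Adj u v ∨ s(u,v) = s(x,y))
    (hxy : x ≠ y) (hyΓ : ¬ Γ.Adj x y)
    (Q : (Γ.deleteEdges {e | e ∈ c.edges}).Walk v0 y) (hQ : Q.IsPath)
    (A : Γ.Walk v0 x) (hA : A.IsPath) (hAsup : ∀ u ∈ A.support, u ∈ c.support) :
    ∃ (w : V) (cw : H.Walk w w), cw.IsCycle ∧ cw.length = A.length + Q.length + 1 := by
  have hle : Γ ≤ H := fun {a b} hab => (hH a b).mpr (Or.inl hab)
  have hDle : (Γ.deleteEdges {e | e ∈ c.edges}) ≤ Γ :=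
    fun {a b} hab => (SimpleGraph.deleteEdges_adj.mp hab).1
  have hAdjxy : H.Adj x y := (hH x y).mpr (Or.inr rfl)
  have hQΓ : (Q.mapLe hDle).IsPath := hQ.mapLe hDle
  have htailpath : ((Q.mapLe hDle).reverse.append A).IsPath := by
    rw [Walk.isPath_def, Walk.support_append]
    have hnd1 : (Q.mapLe hDle).reverse.support.Nodup := hQΓ.reverse.support_nodup
    have hAnodup := hA.support_nodup
    rw [A.support_eq_cons, List.nodup_cons] at hAnodup
    obtain ⟨hv0nA, hndA⟩ := hAnodup
    rw [List.nodup_append]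
    refine ⟨hnd1, hndA, ?_⟩
    intro u hu1 u' hu2 huu'
    subst huu'
    have huQ : u ∈ Q.support := by
      rw [Walk.support_reverse, List.mem_reverse, support_mapLe] at hu1
      exact hu1
    have hur : (Γ.deleteEdges {e | e ∈ c.edges}).Reachable v0 u :=
      reach_of_mem_support Q huQ
    have huc : u ∈ c.support := hAsup u (List.mem_of_mem_tail hu2)
    have : u = v0 := pend_inter_cycle hu hur huc
    subst this
    exact hv0nA hu2
  have hnotmem : s(x,y) ∉ (((Q.mapLe hDle).reverse.append A).mapLe hle).edges := by
    rw [edges_mapLe]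
    intro hmem
    have : s(x,y) ∈ Γ.edgeSet := Walk.edges_subset_edgeSet _ hmem
    rw [SimpleGraph.mem_edgeSet] at this
    exact hyΓ this
  refine ⟨x, Walk.cons hAdjxy (((Q.mapLe hDle).reverse.append A).mapLe hle), ?_, ?_⟩
  · rw [Walk.cons_isCycle_iff]
    exact ⟨(mapLe_isPath hle).mpr htailpath, hnotmem⟩
  · simp only [Walk.length_cons, length_mapLe, Walk.length_append, Walk.length_reverse]
    have : (Q.mapLe hDle).length = Q.length := length_mapLe _ _
    omega

/-- existence of the three cycle lengths in the augmented graph -/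
lemma existence (hc : c.IsCycle)
    (hu : ∀ (w : V) (c' : Γ.Walk w w), c'.IsCycle → ∀ e, e ∈ c'.edges ↔ e ∈ c.edges)
    (hH : ∀ u v, H.Adj u v ↔ Γ.Adj u v ∨ s(u,v) = s(x,y))
    (hx : x ∈ c.support) (hxv : x ≠ v0) (hxy : x ≠ y) (hyΓ : ¬ Γ.Adj x y)
    (Q : (Γ.deleteEdges {e | e ∈ c.edges}).Walk v0 y) (hQ : Q.IsPath) :
    (∃ (w : V) (cw : H.Walk w w), cw.IsCycle ∧ cw.length = c.length) ∧
    (∃ (w : V) (cw : H.Walk w w), cw.IsCycle ∧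
      cw.length = (c.takeUntil x hx).length + Q.length + 1) ∧
    (∃ (w : V) (cw : H.Walk w w), cw.IsCycle ∧
      cw.length = (c.length - (c.takeUntil x hx).length) + Q.length + 1) := by
  have hle : Γ ≤ H := fun {a b} hab => (hH a b).mpr (Or.inl hab)
  obtain ⟨htp, hdp⟩ := takeUntil_isPath hc hx hxv
  have hsum : (c.takeUntil x hx).length + (c.dropUntil x hx).length = c.length :=
    take_drop_length hx
  refine ⟨⟨v0, c.mapLe hle, hc.mapLe hle, length_mapLe hle c⟩, ?_, ?_⟩
  · exact build_cycle hc hu hH hxy hyΓ Q hQ (c.takeUntil x hx) htp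
      (fun u hu' => c.support_takeUntil_subset hx hu')
  · have hA2sup : ∀ u ∈ (c.dropUntil x hx).reverse.support, u ∈ c.support := by
      intro u hu'
      rw [Walk.support_reverse, List.mem_reverse] at hu'
      exact c.support_dropUntil_subset hx hu'
    have := build_cycle hc hu hH hxy hyΓ Q hQ (c.dropUntil x hx).reverse hdp.reverse hA2sup
    rw [Walk.length_reverse] at this
    have hlen : (c.dropUntil x hx).length = c.length - (c.takeUntil x hx).length := by omega
    rw [hlen] at this
    exact this

end Augmented
end Cycle
end Scratch




structure CMGraph (V S : Type) where
  mul : V → V → ℕ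
  symm : ∀ u v, mul u v = mul v u
  loopless : ∀ v, mul v v = 0
  col : V → S

namespace CMGraph

variable {V V' S : Type}

def toSimple (G : CMGraph V S) : SimpleGraph V where
  Adj u v := 0 < G.mul u v
  symm := by constructor; intro u v h; rwa [G.symm v u]
  loopless := by constructor; intro v h; simp [G.loopless] at h

def CycleEdge (G : CMGraph V S) (e : Sym2 V) : Prop :=
  ∃ (w : V) (c : G.toSimple.Walk w w), c.IsCycle ∧ e ∈ c.edges

def OnAllCycles (G : CMGraph V S) (v : V) : Prop :=
  ∀ (w : V) (c : G.toSimple.Walk w w), c.IsCycle → v ∈ c.support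

def cycleVerts (G : CMGraph V S) : Set V :=
  {v | ∃ (w : V) (c : G.toSimple.Walk w w), c.IsCycle ∧ v ∈ c.support}

def Connected (G : CMGraph V S) : Prop := G.toSimple.Connected

def IsKAugTree (G : CMGraph V S) (k : ℕ) : Prop :=
  G.Connected ∧ G.toSimple.edgeSet.ncard = (Nat.card V - 1) + k

def Monocyclic (G : CMGraph V S) : Prop :=
  G.Connected ∧ ∃ (w : V) (c : G.toSimple.Walk w w), c.IsCycle ∧
    ∀ (w' : V) (c' : G.toSimple.Walk w' w'), c'.IsCycle →
      {e | e ∈ c'.edges} = {e | e ∈ c.edges}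

def OnCommonCycle (G : CMGraph V S) (u v : V) : Prop :=
  ∃ (w : V) (c : G.toSimple.Walk w w), c.IsCycle ∧ u ∈ c.support ∧ v ∈ c.support

def IsBlock (G : CMGraph V S) (X : Set V) : Prop :=
  (∀ u ∈ X, ∀ v ∈ X, u ≠ v → G.OnCommonCycle u v) ∧
  ∀ Y : Set V, X ⊆ Y → (∀ u ∈ Y, ∀ v ∈ Y, u ≠ v → G.OnCommonCycle u v) → Y = X

def MonoBlock (G : CMGraph V S) : Prop :=
  ∃! X : Set V, G.IsBlock X ∧ 2 ≤ X.ncard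

def IsMB2AT (G : CMGraph V S) : Prop := G.IsKAugTree 2 ∧ G.MonoBlock

def IsJunction (G : CMGraph V S) (v : V) : Prop :=
  v ∈ G.cycleVerts ∧ G.OnAllCycles v

def deg (G : CMGraph V S) [Fintype V] (v : V) : ℕ := ∑ u, G.mul v u

def res (G : CMGraph V S) [Fintype V] (val : S → ℕ) (v : V) : ℕ :=
  val (G.col v) - G.deg v

def addMul (G : CMGraph V S) [DecidableEq V] (x y : V) (p : ℕ) (hxy : x ≠ y) :
    CMGraph V S where
  mul u v := if (u = x ∧ v = y) ∨ (u = y ∧ v = x) then G.mul u v + p else G.mul u v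
  symm := by
    intro u v
    try dsimp only
    by_cases h : (u = x ∧ v = y) ∨ (u = y ∧ v = x)
    · rw [if_pos h, if_pos (by tauto)]
      try rw [G.symm u v]
    · rw [if_neg h, if_neg (by tauto)]
      try rw [G.symm u v]
  loopless := by
    intro v
    try dsimp only
    have h1 : ¬((v = x ∧ v = y) ∨ (v = y ∧ v = x)) := by
      rintro (⟨h1, h2⟩ | ⟨h1, h2⟩)
      · exact hxy (h1.symm.trans h2)
      · exact hxy (h2.symm.trans h1)
    rw [if_neg h1, G.loopless]
  col := G.col

def removePair (G : CMGraph V S) [DecidableEq V] (x y : V) : CMGraph V S where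
  mul u v := if (u = x ∧ v = y) ∨ (u = y ∧ v = x) then 0 else G.mul u v
  symm := by
    intro u v
    try dsimp only
    by_cases h : (u = x ∧ v = y) ∨ (u = y ∧ v = x)
    · rw [if_pos h, if_pos (by tauto)]
      try rw [G.symm u v]
    · rw [if_neg h, if_neg (by tauto)]
      try rw [G.symm u v]
  loopless := by
    intro v
    try dsimp only
    by_cases h : (v = x ∧ v = y) ∨ (v = y ∧ v = x)
    · simp [h]
    · simp [h, G.loopless]
  col := G.col

def delCyc (G : CMGraph V S) : SimpleGraph V :=
  G.toSimple.deleteEdges {e | G.CycleEdge e}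

def pend (G : CMGraph V S) (v : V) : Set V := {u | G.delCyc.Reachable v u}

def subAt (G : CMGraph V S) (v0 u : V) : Set V :=
  {w | w ∈ G.pend v0 ∧ ∀ p : G.delCyc.Walk v0 w, p.IsPath → u ∈ p.support}

def ParentIn (G : CMGraph V S) (v0 z u : V) : Prop :=
  G.delCyc.Adj z u ∧ u ∈ G.subAt v0 z ∧ u ≠ v0

def Avoids (G : CMGraph V S) {u v w : V} (p : G.toSimple.Walk u v)
    (c : G.toSimple.Walk w w) : Prop :=
  p.IsPath ∧ ∀ e ∈ p.edges, e ∉ c.edges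

end CMGraph

def CMIso {V V' S : Type} (G : CMGraph V S) (G' : CMGraph V' S) : Prop :=
  ∃ ψ : V ≃ V', (∀ v, G'.col (ψ v) = G.col v) ∧ ∀ u v, G'.mul (ψ u) (ψ v) = G.mul u v

/-- If G + p₁·x₁y and G + p₂·x₂y are isomorphic, with x₁ = v_k on the unique
cycle, then x₂ = v_{n−k}. -/
theorem isomorphic_additions_symmetric_position {V S : Type} [Fintype V]
    [DecidableEq V] (G : CMGraph V S) (val : S → ℕ)
    (hcon : G.Connected)
    (v0 : V) (c : G.toSimple.Walk v0 v0) (hc : c.IsCycle)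
    (huniq : ∀ (w : V) (c' : G.toSimple.Walk w w), c'.IsCycle →
      {e | e ∈ c'.edges} = {e | e ∈ c.edges})
    (k : ℕ) (hk0 : 0 < k) (hkn : k < c.length)
    (x1 x2 : V) (hx1 : x1 = c.getVert k) (hx1v : x1 ≠ v0)
    (hx2 : x2 ∈ c.support) (hx2v : x2 ≠ v0) (hx12 : x1 ≠ x2)
    (y : V) (hy : y ∈ G.pend v0) (hyv : y ≠ v0)
    (p1 p2 : ℕ)
    (hxy1 : x1 ≠ y) (hxy2 : x2 ≠ y)
    (hna1 : G.mul x1 y = 0) (hna2 : G.mul x2 y = 0)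
    (hp1 : 1 ≤ p1) (hp1' : p1 ≤ min (G.res val x1) (G.res val y))
    (hp2 : 1 ≤ p2) (hp2' : p2 ≤ min (G.res val x2) (G.res val y))
    (hiso : CMIso (G.addMul x1 y p1 hxy1) (G.addMul x2 y p2 hxy2)) :
    x2 = c.getVert (c.length - k) := by
  classical
  -- basic setup
  have hu : ∀ (w : V) (c' : G.toSimple.Walk w w), c'.IsCycle →
      ∀ e, e ∈ c'.edges ↔ e ∈ c.edges := by
    intro w c' hc' e
    have := huniq w c' hc'
    rw [Set.ext_iff] at this
    exact this e
  have hDeq : G.delCyc = G.toSimple.deleteEdges {e | e ∈ c.edges} := by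
    unfold CMGraph.delCyc
    congr 1
    ext e
    constructor
    · rintro ⟨w, cw, hcw, he⟩
      exact (hu w cw hcw e).mp he
    · intro he
      exact ⟨v0, c, hc, he⟩
  have hyD : (G.toSimple.deleteEdges {e | e ∈ c.edges}).Reachable v0 y := by
    have h0 : G.delCyc.Reachable v0 y := hy
    rwa [hDeq] at h0
  obtain ⟨Q0⟩ := hyD
  have hQ : Q0.toPath.val.IsPath := Q0.toPath.prop
  have hd1 : 1 ≤ Q0.toPath.val.length := by
    rcases Nat.eq_zero_or_pos Q0.toPath.val.length with h | h
    · exfalso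
      have h2 := Q0.toPath.val.getVert_length
      rw [h, SimpleGraph.Walk.getVert_zero] at h2
      exact hyv h2.symm
    · exact h
  -- positions on the cycle
  have hs1 : x1 ∈ c.support :=
    SimpleGraph.Walk.mem_support_iff_exists_getVert.mpr ⟨k, hx1.symm, le_of_lt hkn⟩
  obtain ⟨hj1lt, hj10⟩ := Scratch.takeUntil_length_lt hc hs1 hx1v
  have hgv1 : c.getVert (c.takeUntil x1 hs1).length = x1 := Scratch.getVert_takeUntil_length hs1
  have hj1k : (c.takeUntil x1 hs1).length = k :=
    Scratch.cycle_getVert_inj hc hj1lt hkn (by rw [hgv1, hx1])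
  obtain ⟨hj2lt, hj20⟩ := Scratch.takeUntil_length_lt hc hx2 hx2v
  have hgv2 : c.getVert (c.takeUntil x2 hx2).length = x2 := Scratch.getVert_takeUntil_length hx2
  -- adjacency of the augmented graphs
  have hadd : ∀ (x : V) (hxy : x ≠ y) (p : ℕ), 1 ≤ p → ∀ u v,
      (G.addMul x y p hxy).toSimple.Adj u v ↔ G.toSimple.Adj u v ∨ s(u,v) = s(x,y) := by
    intro x hxy p hp u v
    show (0 < (G.addMul x y p hxy).mul u v) ↔ _
    show (0 < if (u = x ∧ v = y) ∨ (u = y ∧ v = x) then G.mul u v + p else G.mul u v) ↔ _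
    by_cases hcase : (u = x ∧ v = y) ∨ (u = y ∧ v = x)
    · rw [if_pos hcase]
      constructor
      · intro _
        right
        rw [Sym2.eq_iff]
        tauto
      · intro _
        omega
    · rw [if_neg hcase]
      constructor
      · intro h
        exact Or.inl h
      · intro h
        rcases h with h | h
        · exact h
        · exfalso
          rw [Sym2.eq_iff] at h
          tauto
  have hH1 := hadd x1 hxy1 p1 hp1
  have hH2 := hadd x2 hxy2 p2 hp2
  have hyΓ1 : ¬ G.toSimple.Adj x1 y := by
    show ¬ (0 < G.mul x1 y)
    rw [hna1]
    simp
  have hyΓ2 : ¬ G.toSimple.Adj x2 y := by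
    show ¬ (0 < G.mul x2 y)
    rw [hna2]
    simp
  -- characterizations of cycle lengths
  have hchar1 : ∀ m : ℕ,
      (∃ (w : V) (cw : (G.addMul x1 y p1 hxy1).toSimple.Walk w w), cw.IsCycle ∧ cw.length = m) ↔
      (m = c.length ∨ m = k + Q0.toPath.val.length + 1 ∨
        m = (c.length - k) + Q0.toPath.val.length + 1) := by
    intro m
    constructor
    · rintro ⟨w, cw, hcw, rfl⟩
      have := Scratch.classification hc hu hH1 hs1 hx1v hxy1 hyΓ1 ⟨Q0⟩ hyv Q0.toPath.val hQ cw hcw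
      rw [hj1k] at this
      exact this
    · have hex := Scratch.existence hc hu hH1 hs1 hx1v hxy1 hyΓ1 Q0.toPath.val hQ
      rw [hj1k] at hex
      rintro (rfl | rfl | rfl)
      · exact hex.1
      · exact hex.2.1
      · exact hex.2.2
  have hchar2 : ∀ m : ℕ,
      (∃ (w : V) (cw : (G.addMul x2 y p2 hxy2).toSimple.Walk w w), cw.IsCycle ∧ cw.length = m) ↔
      (m = c.length ∨ m = (c.takeUntil x2 hx2).length + Q0.toPath.val.length + 1 ∨
        m = (c.length - (c.takeUntil x2 hx2).length) + Q0.toPath.val.length + 1) := by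
    intro m
    constructor
    · rintro ⟨w, cw, hcw, rfl⟩
      exact Scratch.classification hc hu hH2 hx2 hx2v hxy2 hyΓ2 ⟨Q0⟩ hyv Q0.toPath.val hQ cw hcw
    · have hex := Scratch.existence hc hu hH2 hx2 hx2v hxy2 hyΓ2 Q0.toPath.val hQ
      rintro (rfl | rfl | rfl)
      · exact hex.1
      · exact hex.2.1
      · exact hex.2.2
  -- the isomorphism transports cycle lengths
  obtain ⟨ψ, hcol, hmul⟩ := hiso
  have φ : (G.addMul x1 y p1 hxy1).toSimple ≃g (G.addMul x2 y p2 hxy2).toSimple :=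
    ⟨ψ, by
      intro a b
      show (0 < (G.addMul x2 y p2 hxy2).mul (ψ a) (ψ b)) ↔
        (0 < (G.addMul x1 y p1 hxy1).mul a b)
      rw [hmul a b]⟩
  have hinj : Function.Injective φ.toHom := by
    intro a b h
    apply φ.injective
    simpa using h
  have hinj' : Function.Injective φ.symm.toHom := by
    intro a b h
    apply φ.symm.injective
    simpa using h
  have htrans : ∀ m : ℕ,
      (∃ (w : V) (cw : (G.addMul x1 y p1 hxy1).toSimple.Walk w w), cw.IsCycle ∧ cw.length = m) ↔
      (∃ (w : V) (cw : (G.addMul x2 y p2 hxy2).toSimple.Walk w w), cw.IsCycle ∧ cw.length = m) := by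
    intro m
    constructor
    · rintro ⟨w, cw, hcw, rfl⟩
      exact ⟨φ.toHom w, cw.map φ.toHom,
        (SimpleGraph.Walk.map_isCycle_iff_of_injective hinj).mpr hcw,
        SimpleGraph.Walk.length_map _ cw⟩
    · rintro ⟨w, cw, hcw, rfl⟩
      exact ⟨φ.symm.toHom w, cw.map φ.symm.toHom,
        (SimpleGraph.Walk.map_isCycle_iff_of_injective hinj').mpr hcw,
        SimpleGraph.Walk.length_map _ cw⟩
  have hcomb : ∀ m : ℕ,
      (m = c.length ∨ m = k + Q0.toPath.val.length + 1 ∨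
        m = (c.length - k) + Q0.toPath.val.length + 1) ↔
      (m = c.length ∨ m = (c.takeUntil x2 hx2).length + Q0.toPath.val.length + 1 ∨
        m = (c.length - (c.takeUntil x2 hx2).length) + Q0.toPath.val.length + 1) :=
    fun m => ((hchar1 m).symm.trans (htrans m)).trans (hchar2 m)
  -- arithmetic conclusion
  have hne : (c.takeUntil x2 hx2).length ≠ k := by
    intro h
    apply hx12
    rw [hx1, ← h, hgv2]
  have h1 := (hcomb ((c.takeUntil x2 hx2).length + Q0.toPath.val.length + 1)).mpr
    (Or.inr (Or.inl rfl))
  have h2 := (hcomb (k + Q0.toPath.val.length + 1)).mp (Or.inr (Or.inl rfl))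
  have hj2 : (c.takeUntil x2 hx2).length = c.length - k := by omega
  rw [← hj2]
  exact hgv2.symm
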